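/- Let H₁ and H₂ be Hilbert spaces, H = H₁ ⊕ H₂, and let F : H → H be a bounded self-adjoint operator with block-matrix representation F = [[A, B*], [B, C]] where C : H₂ → H₂ is uniformly positive (i.e., C ≥ ε·I for some ε > 0). Then the negative index of inertia of F equals that of the Schur complement: ind F = ind (A − B* C⁻¹ B). -/

import Mathlib

set_option maxHeartbeats 1000000


open MeasureTheory ContinuousLinearMap
open scoped RealInnerProductSpace

/-- The negative index of inertia of a bounded operator on a real inner product
space: the supremum of dimensions of finite-dimensional subspaces on which the
quadratic form of `F` is uniformly negative. -/
noncomputable def negInd {H : Type*} [NormedAddCommGroup H] [InnerProductSpace ℝ H]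
    (F : H →L[ℝ] H) : ℕ∞ :=
  ⨆ (M : Submodule ℝ H) (_ : FiniteDimensional ℝ M)
    (_ : ∃ ε > 0, ∀ x ∈ M, ⟪F x, x⟫ ≤ -ε * ‖x‖ ^ 2), (Module.finrank ℝ M : ℕ∞)

/-- If `F = [[A, B*], [B, C]]` is a bounded self-adjoint block operator on
`H = H₁ ⊕ H₂` with `C` uniformly positive (and `Cinv` its bounded inverse), then
`ind F = ind (A - B* C⁻¹ B)`. -/
theorem stmt0 {H₁ H₂ : Type*} [NormedAddCommGroup H₁] [InnerProductSpace ℝ H₁] [CompleteSpace H₁]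
    [NormedAddCommGroup H₂] [InnerProductSpace ℝ H₂] [CompleteSpace H₂]
    (F : WithLp 2 (H₁ × H₂) →L[ℝ] WithLp 2 (H₁ × H₂))
    (hFsym : ∀ u v, ⟪F u, v⟫ = ⟪u, F v⟫)
    (A : H₁ →L[ℝ] H₁) (B : H₁ →L[ℝ] H₂) (C Cinv : H₂ →L[ℝ] H₂)
    (hblock : ∀ x y, F ((WithLp.equiv 2 (H₁ × H₂)).symm (x, y)) =
      (WithLp.equiv 2 (H₁ × H₂)).symm (A x + adjoint B y, B x + C y))
    (hpos : ∃ ε > 0, ∀ y : H₂, ε * ‖y‖ ^ 2 ≤ ⟪C y, y⟫)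
    (hCinv1 : Cinv.comp C = 1) (hCinv2 : C.comp Cinv = 1) :
    negInd F = negInd (A - (adjoint B).comp (Cinv.comp B)) := by
  obtain ⟨ε₀, hε₀, hposC⟩ := hpos
  set S : H₁ →L[ℝ] H₁ := A - (adjoint B).comp (Cinv.comp B) with hSdef
  set E := (WithLp.linearEquiv 2 ℝ (H₁ × H₂)).symm with hEdef
  -- C is symmetric
  have hCsym : ∀ y y' : H₂, ⟪C y, y'⟫ = ⟪y, C y'⟫ := by
    intro y y'
    have h := hFsym (E (0, y)) (E (0, y'))
    have h1 : F (E (0, y)) = E (adjoint B y, C y) := by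
      have := hblock 0 y; simpa [hEdef] using this
    have h2 : F (E (0, y')) = E (adjoint B y', C y') := by
      have := hblock 0 y'; simpa [hEdef] using this
    rw [h1, h2] at h
    simpa [WithLp.prod_inner_apply, hEdef] using h
  have hCCinv : ∀ z, C (Cinv z) = z := by
    intro z
    have := DFunLike.congr_fun hCinv2 z
    simpa using this
  -- The key quadratic form identity
  have key : ∀ x y, ⟪F (E (x, y)), E (x, y)⟫
      = ⟪S x, x⟫ + ⟪C (y + Cinv (B x)), y + Cinv (B x)⟫ := by
    intro x y
    have h1 : F (E (x, y)) = E (A x + adjoint B y, B x + C y) := by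
      have := hblock x y; simpa [hEdef] using this
    rw [h1]
    have hadj : ∀ (w : H₂) (v : H₁), ⟪adjoint B w, v⟫ = ⟪w, B v⟫ :=
      fun w v => adjoint_inner_left B v w
    have e1 : ⟪C y, Cinv (B x)⟫ = ⟪y, B x⟫ := by
      rw [hCsym, hCCinv]
    simp only [WithLp.prod_inner_apply, hEdef, WithLp.linearEquiv_symm_apply]
    simp only [AddEquiv.invFun_eq_symm, WithLp.coe_symm_addEquiv, WithLp.ofLp_fst, WithLp.ofLp_snd,
      WithLp.toLp_fst, WithLp.toLp_snd, hSdef,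
      ContinuousLinearMap.sub_apply, ContinuousLinearMap.coe_comp', Function.comp_apply,
      map_add, inner_add_left, inner_add_right, inner_sub_left, hadj, hCCinv, e1]
    have e2 : ⟪Cinv (B x), B x⟫ = ⟪B x, Cinv (B x)⟫ := real_inner_comm _ _
    have e3 : ⟪y, B x⟫ = ⟪B x, y⟫ := real_inner_comm _ _
    ring_nf
    rw [e2, e3]
    ring
  -- nonnegativity of the C-form
  have hCnonneg : ∀ z : H₂, 0 ≤ ⟪C z, z⟫ := fun z =>
    le_trans (by positivity) (hposC z)
  apply le_antisymm
  · -- negInd F ≤ negInd S : project onto first component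
    refine iSup_le fun M => iSup_le fun hM => iSup_le fun hε => ?_
    obtain ⟨ε, hε1, hε2⟩ := hε
    -- projection onto first component
    set Pl : WithLp 2 (H₁ × H₂) →ₗ[ℝ] H₁ :=
      (LinearMap.fst ℝ H₁ H₂) ∘ₗ (WithLp.linearEquiv 2 ℝ (H₁ × H₂)).toLinearMap with hPl
    set N : Submodule ℝ H₁ := M.map Pl with hN
    have hrepr : ∀ u : WithLp 2 (H₁ × H₂), u = E (Pl u, u.snd) := fun u => rfl
    -- quadratic form estimate on N
    have hNprop : ∀ x ∈ N, ⟪S x, x⟫ ≤ -ε * ‖x‖ ^ 2 := by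
      rintro x ⟨u, huM, rfl⟩
      have hu := hε2 u huM
      have hk := key (Pl u) u.snd
      rw [← hrepr u] at hk
      have hnn := hCnonneg (u.snd + Cinv (B (Pl u)))
      have hnorm : ‖u‖ ^ 2 = ‖Pl u‖ ^ 2 + ‖u.snd‖ ^ 2 := WithLp.prod_norm_sq_eq_of_L2 u
      nlinarith [sq_nonneg ‖u.snd‖]
    -- Pl is injective on M
    have hinj : ∀ u ∈ M, Pl u = 0 → u = 0 := by
      intro u huM h0
      have hu := hε2 u huM
      have hk := key (Pl u) u.snd
      rw [← hrepr u] at hk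
      rw [h0] at hk
      simp only [map_zero] at hk
      have hc := hposC (u.snd + Cinv 0)
      have hnorm : ‖u‖ ^ 2 = ‖Pl u‖ ^ 2 + ‖u.snd‖ ^ 2 := WithLp.prod_norm_sq_eq_of_L2 u
      rw [h0] at hnorm
      simp only [norm_zero, zero_pow, ne_eq, OfNat.ofNat_ne_zero, not_false_iff, zero_add,
        inner_zero_left, inner_zero_right, zero_add] at hnorm hk
      have hsnd : u.snd = 0 := by
        by_contra hne
        have : 0 < ‖u.snd‖ ^ 2 := pow_pos (norm_pos_iff.2 hne) 2
        simp only [map_zero, add_zero] at hc hk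
        nlinarith
      have : u = E (Pl u, u.snd) := hrepr u
      rw [h0, hsnd] at this
      simpa [hEdef, ← Prod.zero_eq_mk] using this
    have hMN : FiniteDimensional ℝ M := hM
    have hinj' : Function.Injective (Pl ∘ₗ M.subtype) := by
      intro a b hab
      have : Pl ((a : WithLp 2 (H₁ × H₂)) - b) = 0 := by
        simp only [LinearMap.coe_comp, Function.comp_apply, Submodule.coe_subtype] at hab
        rw [map_sub, hab, sub_self]
      have := hinj _ (M.sub_mem a.2 b.2) this
      exact Subtype.ext (by rwa [sub_eq_zero] at this)
    have hrange : LinearMap.range (Pl ∘ₗ M.subtype) = N := by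
      rw [LinearMap.range_comp, Submodule.range_subtype]
    have hfr : Module.finrank ℝ M = Module.finrank ℝ N := by
      rw [← hrange]
      exact (LinearMap.finrank_range_of_inj hinj').symm
    have hNfd : FiniteDimensional ℝ N := by
      rw [← hrange]; infer_instance
    calc (Module.finrank ℝ M : ℕ∞) = (Module.finrank ℝ N : ℕ∞) := by rw [hfr]
      _ ≤ negInd S := by
          refine le_iSup_of_le N ?_
          rw [iSup_pos hNfd]
          exact le_iSup_of_le ⟨ε, hε1, hNprop⟩ le_rfl
  · -- negInd S ≤ negInd F : graph of x ↦ (x, -Cinv (B x))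
    refine iSup_le fun M => iSup_le fun hM => iSup_le fun hε => ?_
    obtain ⟨ε, hε1, hε2⟩ := hε
    set Tl : H₁ →ₗ[ℝ] WithLp 2 (H₁ × H₂) :=
      E.toLinearMap ∘ₗ (LinearMap.prod LinearMap.id (-(Cinv.comp B : H₁ →ₗ[ℝ] H₂))) with hTl
    have hTlapp : ∀ x, Tl x = E (x, -(Cinv (B x))) := fun x => rfl
    have hTinj : Function.Injective Tl := by
      intro a b hab
      have : (E.symm (Tl a)).1 = (E.symm (Tl b)).1 := by rw [hab]
      simpa [hTlapp] using this
    set N : Submodule ℝ (WithLp 2 (H₁ × H₂)) := M.map Tl with hN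
    have hK : ∀ x : H₁, ‖Tl x‖ ^ 2 ≤ (1 + ‖Cinv.comp B‖ ^ 2) * ‖x‖ ^ 2 := by
      intro x
      have h1 : ‖Tl x‖ ^ 2 = ‖x‖ ^ 2 + ‖Cinv (B x)‖ ^ 2 := by
        rw [hTlapp]
        have := WithLp.prod_norm_sq_eq_of_L2 (E (x, -(Cinv (B x))))
        simpa [hEdef] using this
      have h2 : ‖Cinv (B x)‖ ≤ ‖Cinv.comp B‖ * ‖x‖ := (Cinv.comp B).le_opNorm x
      have h3 : ‖Cinv (B x)‖ ^ 2 ≤ (‖Cinv.comp B‖ * ‖x‖) ^ 2 :=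
        pow_le_pow_left₀ (norm_nonneg _) h2 2
      rw [mul_pow] at h3
      linarith
    set ε' : ℝ := ε / (1 + ‖Cinv.comp B‖ ^ 2) with hε'
    have hden : (0:ℝ) < 1 + ‖Cinv.comp B‖ ^ 2 := by positivity
    have hε'pos : 0 < ε' := div_pos hε1 hden
    have hNprop : ∀ u ∈ N, ⟪F u, u⟫ ≤ -ε' * ‖u‖ ^ 2 := by
      rintro u ⟨x, hxM, rfl⟩
      have hk := key x (-(Cinv (B x)))
      rw [← hTlapp] at hk
      have hz : -(Cinv (B x)) + Cinv (B x) = 0 := by abel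
      rw [hz] at hk
      simp only [map_zero, inner_zero_left, add_zero] at hk
      have hx := hε2 x hxM
      have hKx := hK x
      rw [hk]
      have : ε' * ‖Tl x‖ ^ 2 ≤ ε' * ((1 + ‖Cinv.comp B‖ ^ 2) * ‖x‖ ^ 2) :=
        mul_le_mul_of_nonneg_left hKx hε'pos.le
      have heq : ε' * (1 + ‖Cinv.comp B‖ ^ 2) = ε := by
        rw [hε', div_mul_cancel₀ _ hden.ne']
      nlinarith
    have hinj' : Function.Injective (Tl ∘ₗ M.subtype) :=
      hTinj.comp (Submodule.injective_subtype M)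
    have hrange : LinearMap.range (Tl ∘ₗ M.subtype) = N := by
      rw [LinearMap.range_comp, Submodule.range_subtype]
    have hfr : Module.finrank ℝ M = Module.finrank ℝ N := by
      rw [← hrange]
      exact (LinearMap.finrank_range_of_inj hinj').symm
    have hNfd : FiniteDimensional ℝ N := by
      rw [← hrange]; infer_instance
    calc (Module.finrank ℝ M : ℕ∞) = (Module.finrank ℝ N : ℕ∞) := by rw [hfr]
      _ ≤ negInd F := by
          refine le_iSup_of_le N ?_
          rw [iSup_pos hNfd]
          exact le_iSup_of_le ⟨ε', hε'pos, hNprop⟩ le_rfl
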